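/- (Arnold's lemma) For distinct complex numbers considerations: the 1-forms ω_ij = d log(z_i - z_j) on configuration space satisfy ω_ij ∧ ω_jk + ω_jk ∧ ω_ki + ω_ki ∧ ω_ij = 0 for any three distinct indices i, j, k. Equivalently, as an identity of rational differential 2-forms: d(z_i - z_j)/(z_i - z_j) ∧ d(z_j - z_k)/(z_j - z_k) + d(z_j - z_k)/(z_j - z_k) ∧ d(z_k - z_i)/(z_k - z_i) + d(z_k - z_i)/(z_k - z_i) ∧ d(z_i - z_j)/(z_i - z_j) = 0. -/
import Mathlib


/-- The (constant-coefficient-at-a-point) 1-form `ω_ab = (dz_a − dz_b)/(z_a − z_b)`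
evaluated at the point `z`, as a linear functional on tangent vectors. -/
noncomputable def omegaForm {n : ℕ} (z : Fin n → ℂ) (a b : Fin n) : (Fin n → ℂ) → ℂ :=
  fun v => (v a - v b) / (z a - z b)

/-- The wedge product of two 1-forms, as an alternating bilinear expression. -/
def wedge {n : ℕ} (α β : (Fin n → ℂ) → ℂ) : (Fin n → ℂ) → (Fin n → ℂ) → ℂ :=
  fun u v => α u * β v - α v * β u

/-- Arnold's lemma: `ω_ij ∧ ω_jk + ω_jk ∧ ω_ki + ω_ki ∧ ω_ij = 0` at every point of the
configuration space where `z_i, z_j, z_k` are pairwise distinct. -/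
theorem arnold_lemma {n : ℕ} (z : Fin n → ℂ) (i j k : Fin n)
    (hij : z i ≠ z j) (hjk : z j ≠ z k) (hki : z k ≠ z i)
    (u v : Fin n → ℂ) :
    wedge (omegaForm z i j) (omegaForm z j k) u v
      + wedge (omegaForm z j k) (omegaForm z k i) u v
      + wedge (omegaForm z k i) (omegaForm z i j) u v = 0 := by
  simp only [wedge, omegaForm]
  have h1 : z i - z j ≠ 0 := sub_ne_zero.mpr hij
  have h2 : z j - z k ≠ 0 := sub_ne_zero.mpr hjk
  have h3 : z k - z i ≠ 0 := sub_ne_zero.mpr hki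
  field_simp
  ring
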